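/- Let (ξ_n) be i.i.d. standard normal random variables, and let x_n satisfy x_{n+1} = x_n(1 + h u_n a_n + √h u_n b_n ξ_{n+1}) with x_0 > 0 deterministic, where the deterministic sequences satisfy ā ≤ |a_n| ≤ â, b̄ ≤ |b_n| ≤ b̂, ū ≤ |u_n| ≤ û with all bounds positive, and h = T/N. Then for each γ ∈ (0,1) there exists N(γ) such that for all N ≥ N(γ), P(x_n > 0 for all n = 1,…,N) ≥ 1 - γ. -/

import Mathlib

open MeasureTheory ProbabilityTheory Filter Real Topology
open scoped ENNReal

lemma integrable_exp_abs_gaussian :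
    Integrable (fun x : ℝ => Real.exp |x|) (gaussianReal 0 1) := by
  rw [gaussianReal_of_var_ne_zero 0 one_ne_zero,
    integrable_withDensity_iff (measurable_gaussianPDF 0 1)
      (ae_of_all _ fun x => ENNReal.ofReal_lt_top)]
  have hmeas : AEStronglyMeasurable
      (fun x : ℝ => Real.exp |x| * (gaussianPDF 0 1 x).toReal) volume := by
    exact ((Real.measurable_exp.comp measurable_abs).mul
      (measurable_gaussianPDF 0 1).ennreal_toReal).aestronglyMeasurable
  refine Integrable.mono' (((integrable_exp_neg_mul_sq
    (by norm_num : (0:ℝ) < 1/4)).const_mul ((Real.sqrt (2*Real.pi))⁻¹ * Real.exp 1)))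
    hmeas (ae_of_all _ fun x => ?_)
  have hpdf : (gaussianPDF 0 1 x).toReal = gaussianPDFReal 0 1 x :=
    ENNReal.toReal_ofReal (gaussianPDFReal_nonneg 0 1 x)
  rw [Real.norm_eq_abs, abs_of_nonneg (by positivity), hpdf, gaussianPDFReal]
  push_cast
  have h1 : Real.exp |x| * ((Real.sqrt (2*Real.pi*1))⁻¹ * Real.exp (-(x-0)^2/(2*1)))
      = (Real.sqrt (2*Real.pi))⁻¹ * Real.exp (|x| + (-(x)^2/2)) := by
    rw [Real.exp_add]; ring_nf
  rw [h1]
  have h2 : Real.exp (|x| + (-(x)^2/2)) ≤ Real.exp 1 * Real.exp (-(1/4) * x^2) := by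
    rw [← Real.exp_add]
    apply Real.exp_le_exp.2
    nlinarith [sq_nonneg (|x| - 2), sq_abs x]
  calc (Real.sqrt (2*Real.pi))⁻¹ * Real.exp (|x| + (-(x)^2/2))
      ≤ (Real.sqrt (2*Real.pi))⁻¹ * (Real.exp 1 * Real.exp (-(1/4) * x^2)) := by
        apply mul_le_mul_of_nonneg_left h2 (by positivity)
    _ = (Real.sqrt (2*Real.pi))⁻¹ * Real.exp 1 * Real.exp (-(1/4) * x^2) := by ring

lemma gaussian_tail (t : ℝ) :
    ((gaussianReal 0 1) {x | t ≤ |x|}).toReal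
      ≤ (∫ x, Real.exp |x| ∂(gaussianReal 0 1)) * Real.exp (-t) := by
  have hint : Integrable (fun x : ℝ => Real.exp |x| * Real.exp (-t)) (gaussianReal 0 1) :=
    integrable_exp_abs_gaussian.mul_const _
  have hmarkov := mul_meas_ge_le_integral_of_nonneg
    (ae_of_all _ fun x => by positivity : 0 ≤ᵐ[gaussianReal 0 1]
      fun x : ℝ => Real.exp |x| * Real.exp (-t)) hint 1
  have hset : {x : ℝ | (1:ℝ) ≤ Real.exp |x| * Real.exp (-t)} = {x : ℝ | t ≤ |x|} := by
    ext x
    rw [Set.mem_setOf_eq, Set.mem_setOf_eq, ← Real.exp_add, Real.one_le_exp_iff]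
    constructor <;> intro h <;> linarith
  rw [hset, one_mul] at hmarkov
  rwa [integral_mul_const] at hmarkov

lemma sqrt_tendsto_atTop : Filter.Tendsto Real.sqrt Filter.atTop Filter.atTop := by
  apply Filter.tendsto_atTop_atTop.2
  intro b
  refine ⟨(max 0 b)^2, fun x hx => ?_⟩
  have h1 : max 0 b ≤ Real.sqrt x := by
    rw [show max 0 b = Real.sqrt ((max 0 b)^2) by
      rw [Real.sqrt_sq (le_max_left 0 b)]]
    exact Real.sqrt_le_sqrt hx
  exact le_trans (le_max_right 0 b) h1

/-- positivity of the wealth process with probability close to 1.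
For the recursion `x_{n+1} = x_n (1 + h u_n a_n + √h u_n b_n ξ_{n+1})` with
`x_0 > 0`, i.i.d. standard normal `ξ_n`, bounded coefficients and `h = T/N`,
for each `γ ∈ (0,1)` there is `N(γ)` such that for all `N ≥ N(γ)`,
`P(x_n > 0 for all n = 1,…,N) ≥ 1 - γ`. -/
theorem stmt5 {Ω : Type*} [MeasureSpace Ω] [IsProbabilityMeasure (ℙ : Measure Ω)]
    (ξ : ℕ → Ω → ℝ) (hmeas : ∀ n, Measurable (ξ n))
    (hindep : iIndepFun ξ ℙ)
    (hgauss : ∀ n, Measure.map (ξ n) ℙ = gaussianReal 0 1)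
    (T : ℝ) (hT : 0 < T)
    (abar ahat bbar bhat ubar uhat : ℝ)
    (habar : 0 < abar) (hbbar : 0 < bbar) (hubar : 0 < ubar)
    (γ : ℝ) (hγ : γ ∈ Set.Ioo (0 : ℝ) 1) :
    ∃ N₀ : ℕ, ∀ N : ℕ, N ≥ N₀ →
      ∀ (a b u : ℕ → ℝ) (x : ℕ → Ω → ℝ) (x₀ : ℝ), 0 < x₀ →
        (∀ n, abar ≤ |a n| ∧ |a n| ≤ ahat) →
        (∀ n, bbar ≤ |b n| ∧ |b n| ≤ bhat) →
        (∀ n, ubar ≤ |u n| ∧ |u n| ≤ uhat) →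
        (∀ ω, x 0 ω = x₀) →
        (∀ n ω, x (n + 1) ω =
          x n ω * (1 + (T / N) * u n * a n
            + Real.sqrt (T / N) * u n * b n * ξ (n + 1) ω)) →
        (ℙ {ω | ∀ n, 1 ≤ n → n ≤ N → 0 < x n ω}).toReal ≥ 1 - γ := by
  obtain ⟨hγ0, hγ1⟩ := hγ
  set C := ∫ x, Real.exp |x| ∂(gaussianReal 0 1) with hC
  have hC0 : 0 ≤ C := integral_nonneg fun x => (Real.exp_pos _).le
  set A := max ahat 1 with hA
  set B := max bhat 1 with hB
  set U := max uhat 1 with hU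
  have hA1 : (1:ℝ) ≤ A := le_max_right _ _
  have hB1 : (1:ℝ) ≤ B := le_max_right _ _
  have hU1 : (1:ℝ) ≤ U := le_max_right _ _
  have hA0 : (0:ℝ) < A := lt_of_lt_of_le one_pos hA1
  have hB0 : (0:ℝ) < B := lt_of_lt_of_le one_pos hB1
  have hU0 : (0:ℝ) < U := lt_of_lt_of_le one_pos hU1
  have hsT : 0 < Real.sqrt T := Real.sqrt_pos.2 hT
  obtain ⟨K, hK⟩ : ∃ K : ℝ, K = 1 / (4 * Real.sqrt T * U * B) := ⟨_, rfl⟩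
  have hK0 : 0 < K := by rw [hK]; positivity
  -- the deterministic bound tends to zero
  have htend : Tendsto (fun N : ℕ => (N : ℝ) * (C * Real.exp (-(K * Real.sqrt N))))
      atTop (𝓝 0) := by
    have h1 : Tendsto (fun N : ℕ => K * Real.sqrt N) atTop atTop :=
      (tendsto_const_mul_atTop_of_pos hK0).2
        (sqrt_tendsto_atTop.comp tendsto_natCast_atTop_atTop)
    have h2 := (tendsto_pow_mul_exp_neg_atTop_nhds_zero 2).comp h1
    have h3 : Tendsto (fun N : ℕ =>
        (C / K ^ 2) * ((K * Real.sqrt N) ^ 2 * Real.exp (-(K * Real.sqrt N))))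
        atTop (𝓝 0) := by
      simpa using h2.const_mul (C / K ^ 2)
    refine h3.congr fun N => ?_
    have hs : (Real.sqrt N) ^ 2 = (N : ℝ) := Real.sq_sqrt (Nat.cast_nonneg N)
    rw [mul_pow, hs]
    field_simp
  have hev : ∀ᶠ N : ℕ in atTop,
      ((N : ℝ) * (C * Real.exp (-(K * Real.sqrt N))) ≤ γ ∧ 2 * T * U * A ≤ N) ∧ 1 ≤ N := by
    filter_upwards [htend.eventually (gt_mem_nhds hγ0),
      tendsto_natCast_atTop_atTop.eventually_ge_atTop (2 * T * U * A),
      eventually_ge_atTop 1] with N h1 h2 h3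
    exact ⟨⟨h1.le, h2⟩, h3⟩
  obtain ⟨N₀, hN₀⟩ := eventually_atTop.mp hev
  refine ⟨N₀, fun N hN a b u x x₀ hx₀ ha hb hu hx0 hrec => ?_⟩
  obtain ⟨⟨hsmall, hNbig⟩, hN1⟩ := hN₀ N hN
  have hNpos : (0:ℝ) < N := by exact_mod_cast hN1
  set t := K * Real.sqrt N with htdef
  have ht0 : 0 ≤ t := by positivity
  have hh0 : (0:ℝ) ≤ T / N := by positivity
  -- deterministic step bounds
  have hstep1 : T / N * U * A ≤ 1 / 2 := by
    rw [div_mul_eq_mul_div, div_mul_eq_mul_div, div_le_iff₀ hNpos]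
    nlinarith
  have hstep2 : Real.sqrt (T / N) * U * B * t ≤ 1 / 4 := by
    have hs : Real.sqrt (T / N) * Real.sqrt N = Real.sqrt T := by
      rw [← Real.sqrt_mul hh0, div_mul_cancel₀ _ (ne_of_gt hNpos)]
    have : Real.sqrt (T / N) * U * B * t
        = (Real.sqrt (T / N) * Real.sqrt N) * (U * B * K) := by
      rw [htdef]; ring
    rw [this, hs, hK]
    have h4 : Real.sqrt T * (U * B * (1 / (4 * Real.sqrt T * U * B))) = 1 / 4 := by
      field_simp
    exact le_of_eq h4
  -- positivity on the good event
  have hpos : ∀ ω : Ω, (∀ n, 1 ≤ n → n ≤ N → |ξ n ω| ≤ t) →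
      ∀ n, n ≤ N → 0 < x n ω := by
    intro ω hω n
    induction n with
    | zero => intro _; rw [hx0]; exact hx₀
    | succ n ih =>
      intro hle
      have hxn : 0 < x n ω := ih (Nat.le_of_succ_le hle)
      rw [hrec]
      have h1 : |T / (N:ℝ) * u n * a n| ≤ 1 / 2 := by
        rw [abs_mul, abs_mul, abs_of_nonneg hh0]
        calc T / (N:ℝ) * |u n| * |a n| ≤ T / N * U * A := by
              have h₁ : |u n| ≤ U := le_trans (hu n).2 (le_max_left _ _)
              have h₂ : |a n| ≤ A := le_trans (ha n).2 (le_max_left _ _)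
              gcongr <;> positivity
          _ ≤ 1 / 2 := hstep1
      have h2 : |Real.sqrt (T / N) * u n * b n * ξ (n + 1) ω| ≤ 1 / 4 := by
        rw [abs_mul, abs_mul, abs_mul, abs_of_nonneg (Real.sqrt_nonneg _)]
        calc Real.sqrt (T / N) * |u n| * |b n| * |ξ (n + 1) ω|
            ≤ Real.sqrt (T / N) * U * B * t := by
              have h₁ : |u n| ≤ U := le_trans (hu n).2 (le_max_left _ _)
              have h₂ : |b n| ≤ B := le_trans (hb n).2 (le_max_left _ _)
              have h₃ : |ξ (n + 1) ω| ≤ t := hω (n + 1) (Nat.le_add_left 1 n) hle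
              gcongr <;> positivity
          _ ≤ 1 / 4 := hstep2
      have h1' := abs_le.1 h1
      have h2' := abs_le.1 h2
      have hfac : 0 < 1 + T / (N:ℝ) * u n * a n
          + Real.sqrt (T / N) * u n * b n * ξ (n + 1) ω := by linarith [h1'.1, h2'.1]
      exact mul_pos hxn hfac
  -- probability estimate
  set F : ℕ → Set Ω := fun n => {ω | t < |ξ n ω|} with hF
  have hFmeas : ∀ n, MeasurableSet (F n) :=
    fun n => measurableSet_lt measurable_const (hmeas n).abs
  have hUmeas : MeasurableSet (⋃ n ∈ Finset.Icc 1 N, F n) :=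
    MeasurableSet.biUnion (Finset.Icc 1 N).countable_toSet fun n _ => hFmeas n
  have hFn : ∀ n, ℙ (F n) ≤ ENNReal.ofReal (C * Real.exp (-t)) := by
    intro n
    have hFeq : ℙ (F n) = (gaussianReal 0 1) {y : ℝ | t < |y|} := by
      rw [← hgauss n, Measure.map_apply (hmeas n)
        (measurableSet_lt measurable_const measurable_abs)]
      rfl
    have hle1 : (gaussianReal 0 1) {y : ℝ | t < |y|}
        ≤ (gaussianReal 0 1) {y : ℝ | t ≤ |y|} :=
      measure_mono (Set.setOf_subset_setOf.2 fun y hy => le_of_lt hy)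
    have hle2 : ((gaussianReal 0 1) {y : ℝ | t ≤ |y|}).toReal ≤ C * Real.exp (-t) :=
      gaussian_tail t
    calc ℙ (F n) ≤ (gaussianReal 0 1) {y : ℝ | t ≤ |y|} := hFeq ▸ hle1
      _ = ENNReal.ofReal (((gaussianReal 0 1) {y : ℝ | t ≤ |y|}).toReal) :=
          (ENNReal.ofReal_toReal (measure_ne_top _ _)).symm
      _ ≤ ENNReal.ofReal (C * Real.exp (-t)) := ENNReal.ofReal_le_ofReal hle2
  have hsum : ℙ (⋃ n ∈ Finset.Icc 1 N, F n) ≤ ENNReal.ofReal γ := by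
    calc ℙ (⋃ n ∈ Finset.Icc 1 N, F n) ≤ ∑ n ∈ Finset.Icc 1 N, ℙ (F n) :=
          measure_biUnion_finset_le _ _
      _ ≤ ∑ _n ∈ Finset.Icc 1 N, ENNReal.ofReal (C * Real.exp (-t)) :=
          Finset.sum_le_sum fun n _ => hFn n
      _ = (N : ℝ≥0∞) * ENNReal.ofReal (C * Real.exp (-t)) := by
          rw [Finset.sum_const, Nat.card_Icc]; simp [nsmul_eq_mul]
      _ = ENNReal.ofReal ((N : ℝ) * (C * Real.exp (-t))) := by
          rw [ENNReal.ofReal_mul (Nat.cast_nonneg N), ENNReal.ofReal_natCast]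
      _ ≤ ENNReal.ofReal γ := ENNReal.ofReal_le_ofReal hsmall
  have hsubset : (⋃ n ∈ Finset.Icc 1 N, F n)ᶜ ⊆
      {ω | ∀ n, 1 ≤ n → n ≤ N → 0 < x n ω} := by
    intro ω hω n hn1 hnN
    refine hpos ω (fun m hm1 hmN => ?_) n hnN
    by_contra hcon
    exact hω (Set.mem_biUnion (Finset.mem_coe.2 (Finset.mem_Icc.2 ⟨hm1, hmN⟩)) (lt_of_not_ge hcon))
  have hfinal : 1 - ENNReal.ofReal γ ≤ ℙ {ω | ∀ n, 1 ≤ n → n ≤ N → 0 < x n ω} := by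
    calc (1:ℝ≥0∞) - ENNReal.ofReal γ ≤ 1 - ℙ (⋃ n ∈ Finset.Icc 1 N, F n) :=
          tsub_le_tsub_left hsum 1
      _ = ℙ ((⋃ n ∈ Finset.Icc 1 N, F n)ᶜ) := (prob_compl_eq_one_sub hUmeas).symm
      _ ≤ _ := measure_mono hsubset
  have := ENNReal.toReal_mono (measure_ne_top _ _) hfinal
  rw [ENNReal.toReal_sub_of_le (ENNReal.ofReal_le_one.2 hγ1.le) ENNReal.one_ne_top,
    ENNReal.toReal_one, ENNReal.toReal_ofReal hγ0.le] at this
  exact this
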